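/- Let T_C be a complete binary tree with transition set S(T_C) and define the dynamic-programming table M(v, 1) = w_1(v)·m(v) for v in the left boundary B_l (and 0 otherwise), and M(v, n) = w_n(v)·m(v)·∑_{(u,v) ∈ S(T_C)} M(u, n-1) for n > 1, where w_n(v) ≥ 0 are arbitrary weights. Then ∑_{v ∈ B_r} M(v, N) = ∑_{T : |L(T)| = N} ∏_{n=1}^N w_n(L_n(T))·m(L_n(T)), where the sum is over internal trees of T_C with exactly N leaves. -/

import Mathlib

/-- Full binary trees: every vertex has 0 or 2 children. -/
inductive FBT where
  | leaf : FBT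
  | node : FBT → FBT → FBT
deriving DecidableEq

namespace FBT

/-- Depth of a full binary tree. -/
def depth : FBT → ℕ
  | leaf => 0
  | node a b => max a.depth b.depth + 1

/-- Positions (reversed root-paths: head is the edge nearest the vertex) of the
leaves of `T`, in left-to-right order. -/
def leaves : FBT → List (List Bool)
  | leaf => [[]]
  | node a b => a.leaves.map (· ++ [false]) ++ b.leaves.map (· ++ [true])

/-- Total number of vertices. -/
def numNodes : FBT → ℕ
  | leaf => 1
  | node a b => a.numNodes + b.numNodes + 1

/-- Number of internal (non-leaf) vertices. -/
def internals : FBT → ℕ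
  | leaf => 0
  | node a b => a.internals + b.internals + 1

/-- The recursive probability function π of the stick-breaking prior:
`pi l T pos` where `pos` is the (reversed) position of the root of `T`. -/
def pi (l : List Bool → ℝ) : FBT → List Bool → ℝ
  | leaf, pos => l pos
  | node a b, pos => (1 - l pos) * pi l a (false :: pos) * pi l b (true :: pos)

/-- Probability of an internal tree: `p(T) = π(root)`. -/
def pTree (l : List Bool → ℝ) (T : FBT) : ℝ := pi l T []

/-- The memoized value m̃, with `m̃(parent(root)) = 1`. -/
noncomputable def mt (l : List Bool → ℝ) : List Bool → ℝ
  | [] => 1 - l []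
  | (b :: p) => Real.sqrt (mt l p) * (1 - l (b :: p))

/-- The memoized value m at a vertex: `m(v) = m̃(parent v)^(1/2) · l v`. -/
noncomputable def mleaf (l : List Bool → ℝ) : List Bool → ℝ
  | [] => l []
  | (b :: p) => Real.sqrt (mt l p) * l (b :: p)

/-- `m̃(parent v)`, with the convention `m̃(parent root) = 1`. -/
noncomputable def mparent (l : List Bool → ℝ) : List Bool → ℝ
  | [] => 1
  | (_ :: p) => mt l p

/-- The set of internal trees of the complete binary tree of depth `D`,
i.e. full binary trees of depth at most `D`. -/
def trees : ℕ → Finset FBT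
  | 0 => {leaf}
  | (D+1) => insert leaf ((trees D ×ˢ trees D).image (fun p => node p.1 p.2))

/-- Consecutive-leaf pairs of a single tree. -/
def transitions (T : FBT) : Finset (List Bool × List Bool) :=
  (T.leaves.zip T.leaves.tail).toFinset

/-- The set `S(T_C)` of successive leaf transitions of the complete binary
tree of depth `D`. -/
def S (D : ℕ) : Finset (List Bool × List Bool) := (trees D).biUnion transitions

/-- The left boundary of the complete binary tree of depth `D`. -/
def Bl (D : ℕ) : Finset (List Bool) :=
  (Finset.range (D+1)).image (fun k => List.replicate k false)

/-- The right boundary of the complete binary tree of depth `D`. -/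
def Br (D : ℕ) : Finset (List Bool) :=
  (Finset.range (D+1)).image (fun k => List.replicate k true)

/-- The marginalisation dynamic-programming table (indexed from `n = 1`). -/
def M (S : Finset (List Bool × List Bool)) (Bl : Finset (List Bool))
    (w : ℕ → List Bool → ℝ) (mw : List Bool → ℝ) : ℕ → List Bool → ℝ
  | 0, _ => 0
  | 1, v => if v ∈ Bl then w 1 v * mw v else 0
  | (n+2), v => w (n+2) v * mw v *
      ∑ p ∈ S.filter (fun p => p.2 = v), M S Bl w mw (n+1) p.1

/-- The Viterbi-style max-product dynamic-programming table. -/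
def Mstar (S : Finset (List Bool × List Bool)) (Bl : Finset (List Bool))
    (w : ℕ → List Bool → NNReal) (mw : List Bool → NNReal) : ℕ → List Bool → NNReal
  | 0, _ => 0
  | 1, v => if v ∈ Bl then w 1 v * mw v else 0
  | (n+2), v => w (n+2) v * mw v *
      (S.filter (fun p => p.2 = v)).sup (fun p => Mstar S Bl w mw (n+1) p.1)

/-- The complete binary tree of depth `D`, as a full binary tree. -/
def completeTree : ℕ → FBT
  | 0 => leaf
  | (D+1) => node (completeTree D) (completeTree D)

lemma leaf_mem_trees (D : ℕ) : leaf ∈ trees D := by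
  cases D <;> simp [trees]

lemma mem_trees_iff : ∀ (D : ℕ) (T : FBT), T ∈ trees D ↔ T.depth ≤ D := by
  intro D
  induction D with
  | zero => intro T; cases T <;> simp [trees, depth]
  | succ D ih =>
    intro T
    cases T with
    | leaf => simp [trees, depth, leaf_mem_trees]
    | node a b =>
      simp only [trees, Finset.mem_insert, Finset.mem_image, Finset.mem_product, depth]
      constructor
      · rintro (h | ⟨⟨p, q⟩, ⟨hp, hq⟩, h⟩)
        · exact absurd h (by simp)
        · obtain ⟨rfl, rfl⟩ : p = a ∧ q = b := by
            simpa using h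
          simp [Nat.succ_le_succ, (ih p).mp hp, (ih q).mp hq, max_le]
      · intro h
        rw [Nat.add_le_add_iff_right, max_le_iff] at h
        exact Or.inr ⟨(a, b), ⟨(ih a).mpr h.1, (ih b).mpr h.2⟩, rfl⟩

lemma leaves_ne_nil : ∀ T : FBT, T.leaves ≠ [] := by
  intro T; induction T with
  | leaf => simp [leaves]
  | node a b iha ihb => simp [leaves, iha]

lemma head?_leaves : ∀ T : FBT, ∃ k ≤ T.depth, T.leaves.head? = some (List.replicate k false) := by
  intro T; induction T with
  | leaf => exact ⟨0, le_refl _, rfl⟩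
  | node a b iha ihb =>
    obtain ⟨k, hk, h⟩ := iha
    refine ⟨k + 1, ?_, ?_⟩
    · simp [depth]; omega
    · rw [leaves, List.head?_append, List.head?_map, h]
      simp [List.replicate_succ']

lemma getLast?_leaves : ∀ T : FBT, ∃ k ≤ T.depth, T.leaves.getLast? = some (List.replicate k true) := by
  intro T; induction T with
  | leaf => exact ⟨0, le_refl _, rfl⟩
  | node a b iha ihb =>
    obtain ⟨k, hk, h⟩ := ihb
    refine ⟨k + 1, ?_, ?_⟩
    · simp [depth]; omega
    · rw [leaves, List.getLast?_append, List.getLast?_map, h]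
      simp [List.replicate_succ']
lemma zip_tail_append {α : Type*} :
    ∀ (l₁ l₂ : List α) (x y : α), l₁.getLast? = some x → l₂.head? = some y →
      (l₁ ++ l₂).zip (l₁ ++ l₂).tail = l₁.zip l₁.tail ++ (x, y) :: l₂.zip l₂.tail := by
  intro l₁
  induction l₁ with
  | nil => simp
  | cons a t ih =>
    intro l₂ x y hx hy
    cases t with
    | nil =>
      simp at hx; subst hx
      cases l₂ with
      | nil => simp at hy
      | cons b t₂ => simp at hy; subst hy; simp
    | cons c t' =>
      rw [List.getLast?_cons_cons] at hx
      have := ih l₂ x y hx hy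
      simp only [List.cons_append, List.tail_cons, List.zip_cons_cons] at *
      rw [this]

lemma pairs_map {α β : Type*} (f : α → β) (l : List α) :
    (l.map f).zip (l.map f).tail = (l.zip l.tail).map (Prod.map f f) := by
  rw [← List.map_tail, List.zip_map]

lemma chain'_iff_pairs {α : Type*} {R : α → α → Prop} :
    ∀ (L : List α), List.Chain' R L ↔ ∀ p ∈ L.zip L.tail, R p.1 p.2 := by
  intro L
  induction L with
  | nil => simp [List.Chain']
  | cons a L ih =>
    cases L with
    | nil => simp [List.Chain']
    | cons b L' =>
      simp only [List.Chain', List.isChain_cons_cons]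
      simp only [List.tail_cons, List.zip_cons_cons, List.mem_cons] at *
      constructor
      · rintro ⟨h1, h2⟩ p hp
        rcases hp with rfl | hp
        · exact h1
        · exact ih.mp h2 p hp
      · intro h
        exact ⟨h _ (Or.inl rfl), ih.mpr fun p hp => h p (Or.inr hp)⟩

lemma getLast?_append_cons {α : Type*} (l : List α) (c : α) (q : List α) :
    (l ++ c :: q).getLast? = (c :: q).getLast? := by
  rw [List.getLast?_append]
  cases hq : (c :: q).getLast? with
  | none => simp [List.getLast?_eq_none_iff] at hq
  | some z => simp

lemma dropLast_of_getLast? {α : Type*} {v : List α} {c : α} (h : v.getLast? = some c) :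
    v.dropLast ++ [c] = v := by
  induction v using List.reverseRecOn with
  | nil => simp at h
  | append_singleton l a _ =>
    rw [List.getLast?_concat] at h
    injection h with h; subst h
    simp
/-- Forward structure of consecutive leaf pairs. -/
lemma pairs_leaves_char : ∀ (T : FBT) (u v : List Bool),
    (u, v) ∈ T.leaves.zip T.leaves.tail →
    ∃ a b q, u = List.replicate a true ++ false :: q ∧
      v = List.replicate b false ++ true :: q ∧
      a + q.length + 1 ≤ T.depth ∧ b + q.length + 1 ≤ T.depth := by
  intro T
  induction T with
  | leaf => intro u v h; simp [leaves] at h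
  | node A B ihA ihB =>
    intro u v h
    obtain ⟨x, hx⟩ : ∃ x, (A.leaves.map (· ++ [false])).getLast? = some x := by
      rw [List.getLast?_map]
      obtain ⟨k, _, h'⟩ := getLast?_leaves A
      exact ⟨_, by rw [h']; rfl⟩
    obtain ⟨y, hy⟩ : ∃ y, (B.leaves.map (· ++ [true])).head? = some y := by
      rw [List.head?_map]
      obtain ⟨k, _, h'⟩ := head?_leaves B
      exact ⟨_, by rw [h']; rfl⟩
    rw [leaves, zip_tail_append _ _ x y hx hy] at h
    simp only [List.mem_append, List.mem_cons, pairs_map, List.mem_map] at h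
    rcases h with ⟨⟨u₀, v₀⟩, hp, heq⟩ | heq | ⟨⟨u₀, v₀⟩, hp, heq⟩
    · obtain ⟨rfl, rfl⟩ : u₀ ++ [false] = u ∧ v₀ ++ [false] = v := by
        simpa [Prod.ext_iff] using heq
      obtain ⟨a, b, q, rfl, rfl, ha, hb⟩ := ihA u₀ v₀ hp
      refine ⟨a, b, q ++ [false], by simp, by simp, ?_, ?_⟩ <;>
        · simp only [depth, List.length_append, List.length_cons, List.length_nil]
          omega
    · -- bridge pair
      obtain ⟨rfl, rfl⟩ : u = x ∧ v = y := by simpa [Prod.ext_iff] using heq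
      obtain ⟨k, hk, h'⟩ := getLast?_leaves A
      obtain ⟨k', hk', h''⟩ := head?_leaves B
      rw [List.getLast?_map, h'] at hx
      rw [List.head?_map, h''] at hy
      injection hx with hx; injection hy with hy
      refine ⟨k, k', [], ?_, ?_, ?_, ?_⟩
      · rw [← hx]
      · rw [← hy]
      · simp only [depth, List.length_nil]; omega
      · simp only [depth, List.length_nil]; omega
    · obtain ⟨rfl, rfl⟩ : u₀ ++ [true] = u ∧ v₀ ++ [true] = v := by
        simpa [Prod.ext_iff] using heq
      obtain ⟨a, b, q, rfl, rfl, ha, hb⟩ := ihB u₀ v₀ hp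
      refine ⟨a, b, q ++ [true], by simp, by simp, ?_, ?_⟩ <;>
        · simp only [depth, List.length_append, List.length_cons, List.length_nil]
          omega

def lcomb : ℕ → FBT
  | 0 => leaf
  | n+1 => node leaf (lcomb n)

def rcomb : ℕ → FBT
  | 0 => leaf
  | n+1 => node (rcomb n) leaf

lemma depth_lcomb : ∀ n, (lcomb n).depth = n := by
  intro n; induction n with
  | zero => rfl
  | succ n ih => simp [lcomb, depth, ih]

lemma depth_rcomb : ∀ n, (rcomb n).depth = n := by
  intro n; induction n with
  | zero => rfl
  | succ n ih => simp [rcomb, depth, ih]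

lemma getLast?_leaves_lcomb : ∀ n, (lcomb n).leaves.getLast? = some (List.replicate n true) := by
  intro n; induction n with
  | zero => rfl
  | succ n ih =>
    rw [lcomb, leaves, List.getLast?_append, List.getLast?_map, ih]
    simp [List.replicate_succ']

lemma head?_leaves_rcomb : ∀ n, (rcomb n).leaves.head? = some (List.replicate n false) := by
  intro n; induction n with
  | zero => rfl
  | succ n ih =>
    rw [rcomb, leaves, List.head?_append, List.head?_map, ih]
    simp [List.replicate_succ']

def embed : List Bool → FBT → FBT
  | [], T => T
  | (false :: q), T => embed q (node T leaf)
  | (true :: q), T => embed q (node leaf T)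

lemma depth_embed : ∀ (q : List Bool) (T : FBT), (embed q T).depth = T.depth + q.length := by
  intro q
  induction q with
  | nil => intro T; rfl
  | cons c q ih =>
    intro T
    cases c <;> simp [embed, ih, depth] <;> omega

lemma pairs_embed : ∀ (q : List Bool) (T : FBT) (u v : List Bool),
    (u, v) ∈ T.leaves.zip T.leaves.tail →
    (u ++ q, v ++ q) ∈ (embed q T).leaves.zip (embed q T).leaves.tail := by
  intro q
  induction q with
  | nil => intro T u v h; simpa [embed] using h
  | cons c q ih =>
    intro T u v h
    have step : ∀ T' : FBT, (u ++ [c], v ++ [c]) ∈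
        (if c then node leaf T else node T leaf).leaves.zip
          (if c then node leaf T else node T leaf).leaves.tail := by
      intro _
      cases c
      · -- false: node T leaf; pair is in the map part
        obtain ⟨x, hx⟩ : ∃ x, (T.leaves.map (· ++ [false])).getLast? = some x := by
          rw [List.getLast?_map]
          obtain ⟨k, _, h'⟩ := getLast?_leaves T
          exact ⟨_, by rw [h']; rfl⟩
        simp only [if_neg Bool.false_ne_true, leaves]
        rw [zip_tail_append _ _ x [true] hx (by rfl)]
        simp only [List.mem_append, List.mem_cons, pairs_map, List.mem_map]
        exact Or.inl ⟨(u, v), h, rfl⟩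
      · obtain ⟨y, hy⟩ : ∃ y, (T.leaves.map (· ++ [true])).head? = some y := by
          rw [List.head?_map]
          obtain ⟨k, _, h'⟩ := head?_leaves T
          exact ⟨_, by rw [h']; rfl⟩
        simp only [if_pos rfl, ↓reduceIte, leaves]
        have hm : List.map (fun x => x ++ [false]) ([[]] : List (List Bool)) = [[false]] := rfl
        rw [hm, zip_tail_append [[false]] (T.leaves.map (· ++ [true])) [false] y rfl hy]
        simp only [List.mem_append, List.mem_cons, pairs_map, List.mem_map]
        exact Or.inr (Or.inr ⟨(u, v), h, rfl⟩)
    have h2 := step T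
    cases c
    · have := ih (node T leaf) (u ++ [false]) (v ++ [false]) (by simpa using h2)
      simpa [embed] using this
    · have := ih (node leaf T) (u ++ [true]) (v ++ [true]) (by simpa using h2)
      simpa [embed] using this

lemma mem_S_iff (D : ℕ) (u v : List Bool) :
    (u, v) ∈ S D ↔ ∃ a b q, u = List.replicate a true ++ false :: q ∧
      v = List.replicate b false ++ true :: q ∧
      a + q.length + 1 ≤ D ∧ b + q.length + 1 ≤ D := by
  constructor
  · intro h
    rw [S, Finset.mem_biUnion] at h
    obtain ⟨T, hT, hp⟩ := h
    rw [transitions, List.mem_toFinset] at hp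
    obtain ⟨a, b, q, h1, h2, h3, h4⟩ := pairs_leaves_char T u v hp
    have hd := (mem_trees_iff D T).mp hT
    exact ⟨a, b, q, h1, h2, h3.trans hd, h4.trans hd⟩
  · rintro ⟨a, b, q, rfl, rfl, ha, hb⟩
    rw [S, Finset.mem_biUnion]
    refine ⟨embed q (node (lcomb a) (rcomb b)), ?_, ?_⟩
    · rw [mem_trees_iff, depth_embed]
      simp [depth, depth_lcomb, depth_rcomb]
      omega
    · rw [transitions, List.mem_toFinset]
      have base : (List.replicate a true ++ [false], List.replicate b false ++ [true]) ∈
          (node (lcomb a) (rcomb b)).leaves.zip (node (lcomb a) (rcomb b)).leaves.tail := by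
        obtain hx := getLast?_leaves_lcomb a
        obtain hy := head?_leaves_rcomb b
        rw [leaves, zip_tail_append _ _ (List.replicate a true ++ [false])
          (List.replicate b false ++ [true])
          (by rw [List.getLast?_map, hx]; rfl) (by rw [List.head?_map, hy]; rfl)]
        simp
      have := pairs_embed q _ _ _ base
      simpa using this
lemma leaves_injective : ∀ T₁ T₂ : FBT, T₁.leaves = T₂.leaves → T₁ = T₂ := by
  intro T₁
  induction T₁ with
  | leaf =>
    intro T₂ h
    cases T₂ with
    | leaf => rfl
    | node a b =>
      exfalso
      have : ([] : List Bool) ∈ (node a b).leaves := by rw [← h]; simp [leaves]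
      simp [leaves] at this
  | node a b iha ihb =>
    intro T₂ h
    cases T₂ with
    | leaf =>
      exfalso
      have : ([] : List Bool) ∈ (node a b).leaves := by rw [h]; simp [leaves]
      simp [leaves] at this
    | node a' b' =>
      simp only [leaves] at h
      set pf : List Bool → Bool := fun v => v.getLast? == some false with hpf
      have key : ∀ (A B : List (List Bool)),
          (A.map (· ++ [false]) ++ B.map (· ++ [true])).filter pf = A.map (· ++ [false]) := by
        intro A B
        rw [List.filter_append]
        have h1 : (A.map (· ++ [false])).filter pf = A.map (· ++ [false]) :=
          List.filter_eq_self.mpr (by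
            intro x hx
            obtain ⟨y, _, rfl⟩ := List.mem_map.mp hx
            simp [hpf, List.getLast?_concat])
        have h2 : (B.map (· ++ [true])).filter pf = [] :=
          List.filter_eq_nil_iff.mpr (by
            intro x hx
            obtain ⟨y, _, rfl⟩ := List.mem_map.mp hx
            simp [hpf, List.getLast?_concat])
        rw [h1, h2, List.append_nil]
      have hA : a.leaves.map (· ++ [false]) = a'.leaves.map (· ++ [false]) := by
        have := congrArg (List.filter pf) h
        rwa [key, key] at this
      have ha2 : a.leaves = a'.leaves :=
        List.map_injective_iff.mpr (List.append_left_injective [false]) hA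
      have hB : b.leaves.map (· ++ [true]) = b'.leaves.map (· ++ [true]) := by
        rw [hA] at h
        exact List.append_cancel_left h
      have hb2 : b.leaves = b'.leaves :=
        List.map_injective_iff.mpr (List.append_left_injective [true]) hB
      rw [iha _ ha2, ihb _ hb2]

lemma mem_Bl_iff (D : ℕ) (v : List Bool) :
    v ∈ Bl D ↔ ∃ k, k ≤ D ∧ v = List.replicate k false := by
  simp [Bl, Nat.lt_succ_iff, eq_comm]

lemma mem_Br_iff (D : ℕ) (v : List Bool) :
    v ∈ Br D ↔ ∃ k, k ≤ D ∧ v = List.replicate k true := by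
  simp [Br, Nat.lt_succ_iff, eq_comm]

lemma edge_strip (D : ℕ) (c : Bool) (u v : List Bool)
    (h : (u ++ [c], v ++ [c]) ∈ S (D + 1)) : (u, v) ∈ S D := by
  rw [mem_S_iff] at h ⊢
  obtain ⟨a, b, q, hu, hv, ha, hb⟩ := h
  cases q using List.reverseRecOn with
  | nil =>
    exfalso
    have h1 := congrArg List.getLast? hu
    have h2 := congrArg List.getLast? hv
    rw [List.getLast?_concat, getLast?_append_cons] at h1 h2
    simp at h1 h2
    rw [h1] at h2
    exact Bool.false_ne_true h2
  | append_singleton q₀ d =>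
    have hlast : (false :: (q₀ ++ [d])).getLast? = some d := by
      rw [show false :: (q₀ ++ [d]) = (false :: q₀) ++ [d] by simp, List.getLast?_concat]
    have h1 := congrArg List.getLast? hu
    rw [List.getLast?_concat, getLast?_append_cons, hlast] at h1
    injection h1 with h1
    subst h1
    refine ⟨a, b, q₀, ?_, ?_, ?_, ?_⟩
    · have : u ++ [c] = (List.replicate a true ++ false :: q₀) ++ [c] := by rw [hu]; simp
      exact List.append_cancel_right this
    · have : v ++ [c] = (List.replicate b false ++ true :: q₀) ++ [c] := by rw [hv]; simp
      exact List.append_cancel_right this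
    · simp only [List.length_append, List.length_cons, List.length_nil] at ha; omega
    · simp only [List.length_append, List.length_cons, List.length_nil] at hb; omega

/-- sources and targets of edges are nonempty, and target's last bit propagates. -/
lemma edge_src_ne_nil {D : ℕ} {u v : List Bool} (h : (u, v) ∈ S D) : u ≠ [] := by
  obtain ⟨a, b, q, rfl, -, -, -⟩ := (mem_S_iff D u v).mp h
  simp
lemma edge_tgt_ne_nil {D : ℕ} {u v : List Bool} (h : (u, v) ∈ S D) : v ≠ [] := by
  obtain ⟨a, b, q, -, rfl, -, -⟩ := (mem_S_iff D u v).mp h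
  simp

lemma edge_last_mono {D : ℕ} {u v : List Bool} (h : (u, v) ∈ S D)
    (hu : u.getLast? = some true) : v.getLast? = some true := by
  obtain ⟨a, b, q, rfl, rfl, -, -⟩ := (mem_S_iff D u v).mp h
  rw [getLast?_append_cons] at hu ⊢
  cases q with
  | nil => simp at hu
  | cons c q' => rw [List.getLast?_cons_cons] at hu ⊢; exact hu

lemma chain_true_mono {D : ℕ} : ∀ (L : List (List Bool)) (x : List Bool),
    List.Chain' (fun a b => (a, b) ∈ S D) (x :: L) → x.getLast? = some true →
    ∀ v ∈ L, v.getLast? = some true := by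
  intro L
  induction L with
  | nil => simp
  | cons y L ih =>
    intro x hch hx v hv
    simp only [List.Chain', List.isChain_cons_cons] at hch
    have hy := edge_last_mono hch.1 hx
    rcases List.mem_cons.mp hv with rfl | hv
    · exact hy
    · exact ih y hch.2 hy v hv

lemma chain_all_ne_nil {D : ℕ} : ∀ (L : List (List Bool)) (x : List Bool),
    List.Chain' (fun a b => (a, b) ∈ S D) (x :: L) → L ≠ [] →
    ∀ v ∈ x :: L, v ≠ [] := by
  intro L
  induction L with
  | nil => intro x _ h; exact absurd rfl h
  | cons y L ih =>
    intro x hch _ v hv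
    simp only [List.Chain', List.isChain_cons_cons] at hch
    rcases List.mem_cons.mp hv with rfl | hv
    · exact edge_src_ne_nil hch.1
    · cases L with
      | nil =>
        rcases List.mem_cons.mp hv with rfl | hv
        · exact edge_tgt_ne_nil hch.1
        · simp at hv
      | cons z L' => exact ih y hch.2 (by simp) v hv
lemma mem_of_getLast?' {α : Type*} {l : List α} {a : α} (h : l.getLast? = some a) : a ∈ l := by
  have := dropLast_of_getLast? h
  rw [← this]; simp

lemma exists_getLast? {α : Type*} (l : List α) (h : l ≠ []) : ∃ c, l.getLast? = some c :=
  ⟨l.getLast h, List.getLast?_eq_getLast h⟩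

lemma boundary_single {D : ℕ} {v : List Bool} (h1 : v ∈ Bl D) (h2 : v ∈ Br D) : v = [] := by
  obtain ⟨k, hk, rfl⟩ := (mem_Bl_iff D v).mp h1
  obtain ⟨k', hk', he⟩ := (mem_Br_iff D _).mp h2
  cases k with
  | zero => rfl
  | succ k =>
    cases k' with
    | zero => simp at he
    | succ k' =>
      have := congrArg List.head? he
      rw [List.head?_replicate, List.head?_replicate] at this
      simp at this

lemma exists_tree : ∀ (D : ℕ) (L : List (List Bool)) (x y : List Bool),
    L.head? = some x → x ∈ Bl D → L.getLast? = some y → y ∈ Br D →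
    List.Chain' (fun a b => (a, b) ∈ S D) L →
    ∃ T ∈ trees D, T.leaves = L := by
  intro D
  induction D with
  | zero =>
    intro L x y hx hxB hy hyB hch
    cases L with
    | nil => simp at hx
    | cons v₁ L₀ =>
      cases L₀ with
      | nil =>
        simp only [List.head?_cons, Option.some.injEq] at hx
        simp only [List.getLast?_singleton, Option.some.injEq] at hy
        subst hx; subst hy
        have : v₁ = [] := boundary_single hxB hyB
        subst this
        exact ⟨leaf, leaf_mem_trees 0, rfl⟩
      | cons v₂ L' =>
        exfalso
        have he := (List.isChain_cons_cons.mp hch).1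
        obtain ⟨a, b, q, -, -, ha, -⟩ := (mem_S_iff 0 v₁ v₂).mp he
        omega
  | succ D ih =>
    intro L x y hx hxB hy hyB hch
    cases L with
    | nil => simp at hx
    | cons v₁ L₀ =>
      cases L₀ with
      | nil =>
        simp only [List.head?_cons, Option.some.injEq] at hx
        simp only [List.getLast?_singleton, Option.some.injEq] at hy
        subst hx; subst hy
        have : v₁ = [] := boundary_single hxB hyB
        subst this
        exact ⟨leaf, leaf_mem_trees _, rfl⟩
      | cons v₂ L' =>
        simp only [List.head?_cons, Option.some.injEq] at hx
        subst hx
        have he₁ : (v₁, v₂) ∈ S (D + 1) := (List.isChain_cons_cons.mp hch).1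
        have hnil : ∀ v ∈ v₁ :: v₂ :: L', v ≠ [] :=
          chain_all_ne_nil _ v₁ hch (by simp)
        obtain ⟨k, hk, rfl⟩ := (mem_Bl_iff _ v₁).mp hxB
        have hk0 : k ≠ 0 := by
          rintro rfl
          exact hnil _ (by simp) rfl
        obtain ⟨k', hk', rfl⟩ := (mem_Br_iff _ y).mp hyB
        have hyL : List.replicate k' true ∈ List.replicate k false :: v₂ :: L' :=
          mem_of_getLast?' hy
        have hk'0 : k' ≠ 0 := by
          rintro rfl
          exact hnil _ hyL rfl
        set pf : List Bool → Bool := fun v => v.getLast? == some false with hpfdef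
        set L₀ : List (List Bool) := List.replicate k false :: v₂ :: L' with hL₀
        set A := L₀.takeWhile pf with hA
        set B := L₀.dropWhile pf with hB
        have hAB : A ++ B = L₀ := List.takeWhile_append_dropWhile
        have hAfalse : ∀ v ∈ A, v.getLast? = some false := by
          intro v hv
          have := List.mem_takeWhile_imp hv
          simpa [hpfdef] using this
        have hpfx : pf (List.replicate k false) = true := by
          simp [hpfdef, List.getLast?_replicate, hk0]
        have hAcons : A = List.replicate k false :: (v₂ :: L').takeWhile pf := by
          rw [hA, hL₀, List.takeWhile_cons_of_pos hpfx]
        have hAne : A ≠ [] := by rw [hAcons]; simp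
        have hytrue : (List.replicate k' true).getLast? = some true := by
          rw [List.getLast?_replicate]; simp [hk'0]
        have hBne : B ≠ [] := by
          intro hB0
          have : ∀ v ∈ L₀, pf v = true := List.dropWhile_eq_nil_iff.mp hB0
          have := this _ hyL
          rw [hpfdef] at this
          simp only [beq_iff_eq] at this
          rw [hytrue] at this
          simp at this
        obtain ⟨z, rest, hzrest⟩ := List.exists_cons_of_ne_nil hBne
        have hchAB : List.Chain' (fun a b => (a, b) ∈ S (D + 1)) (A ++ B) := by
          rw [hAB]; exact hch
        have hchA : List.Chain' (fun a b => (a, b) ∈ S (D + 1)) A :=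
          (List.isChain_append.mp hchAB).1
        have hchB : List.Chain' (fun a b => (a, b) ∈ S (D + 1)) B :=
          (List.isChain_append.mp hchAB).2.1
        have hbridge := (List.isChain_append.mp hchAB).2.2
        have hzL : z ∈ L₀ := by
          have : z ∈ B := by rw [hzrest]; simp
          exact (List.dropWhile_sublist pf).mem this
        have hzne : z ≠ [] := hnil z hzL
        have hztrue : z.getLast? = some true := by
          obtain ⟨z', zs, rfl⟩ := List.exists_cons_of_ne_nil hzne
          have hpfz : pf ((z' :: zs).dropLast ++ [(z' :: zs).getLast (by simp)]) = false := by
            rw [List.dropLast_append_getLast]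
            have hBne' : L₀.dropWhile pf ≠ [] := hBne
            have := List.head_dropWhile_not pf (l := L₀) hBne'
            have hhead : (L₀.dropWhile pf).head hBne' = z' :: zs := by
              have h0 : L₀.dropWhile pf = (z' :: zs) :: rest := hzrest
              simp [h0]
            rwa [hhead] at this
          rw [List.dropLast_append_getLast] at hpfz
          rw [hpfdef] at hpfz
          simp only [beq_eq_false_iff_ne, ne_eq] at hpfz
          obtain ⟨c, hc⟩ := exists_getLast? (z' :: zs) (by simp)
          cases c
          · exact absurd hc hpfz
          · exact hc
        have hBtrue : ∀ v ∈ B, v.getLast? = some true := by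
          intro v hv
          rw [hzrest] at hv hchB
          rcases List.mem_cons.mp hv with rfl | hv
          · exact hztrue
          · exact chain_true_mono rest z hchB hztrue v hv
        obtain ⟨gA, hgA⟩ := exists_getLast? A hAne
        have hgAA : gA ∈ A := mem_of_getLast?' hgA
        have hbr : (gA, z) ∈ S (D + 1) := by
          apply hbridge gA (by rw [hgA]; rfl) z
          rw [hzrest]; rfl
        obtain ⟨a, b, q, hgAeq, hzeq, ha, hb⟩ := (mem_S_iff _ _ _).mp hbr
        have hq : q = [] := by
          cases q with
          | nil => rfl
          | cons c q' =>
            exfalso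
            have h1 : gA.getLast? = (c :: q').getLast? := by
              rw [hgAeq, getLast?_append_cons, List.getLast?_cons_cons]
            have h2 : z.getLast? = (c :: q').getLast? := by
              rw [hzeq, getLast?_append_cons, List.getLast?_cons_cons]
            rw [hAfalse gA hgAA] at h1
            rw [hztrue] at h2
            rw [← h1] at h2
            simp at h2
        subst hq
        -- stripped lists
        set LA := A.map List.dropLast with hLA
        set LB := B.map List.dropLast with hLB
        have hAeq : LA.map (· ++ [false]) = A := by
          rw [hLA, List.map_map]
          refine (List.map_congr_left ?_).trans (List.map_id A)
          intro v hv
          exact dropLast_of_getLast? (hAfalse v hv)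
        have hBeq : LB.map (· ++ [true]) = B := by
          rw [hLB, List.map_map]
          refine (List.map_congr_left ?_).trans (List.map_id B)
          intro v hv
          exact dropLast_of_getLast? (hBtrue v hv)
        -- hypotheses for LA
        have hdropk : (List.replicate k false).dropLast = List.replicate (k - 1) false := by
          conv_lhs => rw [show k = (k - 1) + 1 by omega, List.replicate_succ']
          exact List.dropLast_concat
        have hheadLA : LA.head? = some (List.replicate (k - 1) false) := by
          rw [hLA, List.head?_map, hAcons]
          simp [hdropk]
        have hgALA : LA.getLast? = some (List.replicate a true) := by
          rw [hLA, List.getLast?_map, hgA, hgAeq]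
          simp [List.dropLast_concat]
        have hchLA : List.Chain' (fun u v => (u, v) ∈ S D) LA := by
          have h1 : List.Chain' (fun a b => (a, b) ∈ S (D + 1)) (LA.map (· ++ [false])) := by
            rw [hAeq]; exact hchA
          exact ((List.isChain_map _).mp h1).imp (fun u v h => edge_strip D false u v h)
        obtain ⟨Ta, hTa, hTaL⟩ := ih LA (List.replicate (k - 1) false) (List.replicate a true)
          hheadLA ((mem_Bl_iff _ _).mpr ⟨k - 1, by omega, rfl⟩)
          hgALA ((mem_Br_iff _ _).mpr ⟨a, by simp at ha; omega, rfl⟩)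
          hchLA
        -- hypotheses for LB
        have hheadLB : LB.head? = some (List.replicate b false) := by
          rw [hLB, List.head?_map, hzrest]
          simp [hzeq, List.dropLast_concat]
        have hgB : B.getLast? = some (List.replicate k' true) := by
          obtain ⟨c, hc⟩ := exists_getLast? B hBne
          have h1 : (A ++ B).getLast? = some c := by rw [List.getLast?_append, hc]; rfl
          rw [hAB] at h1
          have hcc : some (List.replicate k' true) = some c := hy.symm.trans h1
          rw [hc, ← hcc]
        have hdropk' : (List.replicate k' true).dropLast = List.replicate (k' - 1) true := by
          conv_lhs => rw [show k' = (k' - 1) + 1 by omega, List.replicate_succ']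
          exact List.dropLast_concat
        have hgBLB : LB.getLast? = some (List.replicate (k' - 1) true) := by
          rw [hLB, List.getLast?_map, hgB]
          simp [hdropk']
        have hchLB : List.Chain' (fun u v => (u, v) ∈ S D) LB := by
          have h1 : List.Chain' (fun a b => (a, b) ∈ S (D + 1)) (LB.map (· ++ [true])) := by
            rw [hBeq]; exact hchB
          exact ((List.isChain_map _).mp h1).imp (fun u v h => edge_strip D true u v h)
        obtain ⟨Tb, hTb, hTbL⟩ := ih LB (List.replicate b false) (List.replicate (k' - 1) true)
          hheadLB ((mem_Bl_iff _ _).mpr ⟨b, by simp at hb; omega, rfl⟩)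
          hgBLB ((mem_Br_iff _ _).mpr ⟨k' - 1, by omega, rfl⟩)
          hchLB
        refine ⟨node Ta Tb, ?_, ?_⟩
        · rw [mem_trees_iff] at hTa hTb ⊢
          rw [depth]
          omega
        · rw [leaves, hTaL, hTbL, hAeq, hBeq, hAB]
def P (St : Finset (List Bool × List Bool)) (Blf : Finset (List Bool)) :
    ℕ → List Bool → Finset (List (List Bool))
  | 0, _ => ∅
  | 1, v => if v ∈ Blf then {[v]} else ∅
  | (n+2), v => (St.filter (fun p => p.2 = v)).biUnion
      (fun p => (P St Blf (n+1) p.1).image (fun L => L ++ [v]))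

lemma P_shape (St : Finset (List Bool × List Bool)) (Blf : Finset (List Bool)) :
    ∀ n v L, L ∈ P St Blf n v →
      L.length = n ∧ L.getLast? = some v ∧
      (∃ h t, L = h :: t ∧ h ∈ Blf) ∧ List.Chain' (fun a b => (a, b) ∈ St) L
  | 0, v, L => by simp [P]
  | 1, v, L => by
    intro hL
    rw [P] at hL
    split at hL
    · simp only [Finset.mem_singleton] at hL
      subst hL
      exact ⟨rfl, rfl, ⟨v, [], rfl, by assumption⟩, List.isChain_singleton v⟩
    · simp at hL
  | (n+2), v, L => by
    intro hL
    rw [P] at hL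
    simp only [Finset.mem_biUnion, Finset.mem_filter, Finset.mem_image] at hL
    obtain ⟨p, ⟨hpS, hpv⟩, L', hL', rfl⟩ := hL
    obtain ⟨hlen, hlast, ⟨h, t, rfl, hh⟩, hch⟩ := P_shape St Blf (n+1) p.1 L' hL'
    refine ⟨by simp [← hlen], List.getLast?_concat, ⟨h, t ++ [v], by simp, hh⟩, ?_⟩
    simp only [List.Chain', List.isChain_append]
    refine ⟨hch, List.isChain_singleton v, ?_⟩
    intro x hx y hy
    rw [hlast] at hx
    simp only [Option.mem_def, Option.some.injEq] at hx
    simp only [List.head?_cons, Option.mem_def, Option.some.injEq] at hy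
    subst hx; subst hy
    have : (p.1, p.2) = p := rfl
    rw [← hpv, this]
    exact hpS

lemma P_full (St : Finset (List Bool × List Bool)) (Blf : Finset (List Bool)) :
    ∀ n (L : List (List Bool)) (v h : List Bool) (t : List (List Bool)), L = h :: t → h ∈ Blf →
      L.getLast? = some v → L.length = n → List.Chain' (fun a b => (a, b) ∈ St) L →
      L ∈ P St Blf n v
  | 0, L, v, h, t => by
    intro hL _ _ hlen _
    subst hL; simp at hlen
  | 1, L, v, h, t => by
    intro hL hh hlast hlen hch
    subst hL
    have : t = [] := by simpa using hlen
    subst this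
    rw [List.getLast?_singleton] at hlast
    injection hlast with hlast
    subst hlast
    rw [P, if_pos hh]
    simp
  | (n+2), L, v, h, t => by
    intro hL hh hlast hlen hch
    have hLsplit : L.dropLast ++ [v] = L := dropLast_of_getLast? hlast
    have htne : t ≠ [] := by
      rintro rfl
      rw [hL] at hlen; simp at hlen
    have hL' : L.dropLast = h :: t.dropLast := by
      rw [hL]
      cases t with
      | nil => exact absurd rfl htne
      | cons c cs => simp
    have hlen' : L.dropLast.length = n + 1 := by
      have := congrArg List.length hLsplit
      simp only [List.length_append, List.length_cons, List.length_nil] at this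
      omega
    obtain ⟨u, hu⟩ := exists_getLast? L.dropLast (by rw [hL']; simp)
    have hch2 : List.Chain' (fun a b => (a, b) ∈ St) (L.dropLast ++ [v]) := by
      rw [hLsplit]; exact hch
    simp only [List.Chain', List.isChain_append] at hch2
    have hbr : (u, v) ∈ St := hch2.2.2 u (by rw [hu]; rfl) v rfl
    rw [P]
    simp only [Finset.mem_biUnion, Finset.mem_filter, Finset.mem_image]
    refine ⟨(u, v), ⟨hbr, rfl⟩, L.dropLast, ?_, hLsplit⟩
    exact P_full St Blf (n+1) L.dropLast u h t.dropLast hL' hh hu hlen' hch2.1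

lemma M_eq_sum (St : Finset (List Bool × List Bool)) (Blf : Finset (List Bool))
    (w : ℕ → List Bool → ℝ) (mw : List Bool → ℝ) :
    ∀ n v, M St Blf w mw n v =
      ∑ L ∈ P St Blf n v, ∏ i ∈ Finset.range n, w (i+1) (L.getD i []) * mw (L.getD i [])
  | 0, v => by simp [M, P]
  | 1, v => by
    rw [M, P]
    split
    · simp
    · simp
  | (n+2), v => by
    rw [M, P]
    have hdisj : ((St.filter (fun p => p.2 = v)) : Set (List Bool × List Bool)).PairwiseDisjoint
        (fun p => (P St Blf (n+1) p.1).image (fun L => L ++ [v])) := by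
      intro p hp p' hp' hne
      simp only [Function.onFun, Finset.disjoint_left]
      intro L hL hL'
      simp only [Finset.mem_image] at hL hL'
      obtain ⟨L₁, hL₁, he⟩ := hL
      obtain ⟨L₂, hL₂, he'⟩ := hL'
      rw [← he'] at he
      have h12 : L₁ = L₂ := List.append_cancel_right he
      subst h12
      have e1 := (P_shape St Blf (n+1) p.1 L₁ hL₁).2.1
      have e2 := (P_shape St Blf (n+1) p'.1 L₁ hL₂).2.1
      rw [e1] at e2
      injection e2 with e2
      simp only [Finset.coe_filter, Set.mem_setOf_eq] at hp hp'
      apply hne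
      exact Prod.ext e2 (hp.2.trans hp'.2.symm)
    rw [Finset.sum_biUnion hdisj]
    have himg : ∀ p ∈ St.filter (fun p => p.2 = v),
        ∑ L ∈ (P St Blf (n+1) p.1).image (fun L => L ++ [v]),
          ∏ i ∈ Finset.range (n+2), w (i+1) (L.getD i []) * mw (L.getD i []) =
        ∑ L ∈ P St Blf (n+1) p.1,
          (∏ i ∈ Finset.range (n+1), w (i+1) (L.getD i []) * mw (L.getD i [])) *
            (w (n+2) v * mw v) := by
      intro p hp
      rw [Finset.sum_image (by intro x _ y _ h; exact List.append_cancel_right h)]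
      apply Finset.sum_congr rfl
      intro L hL
      have hlen : L.length = n + 1 := (P_shape St Blf (n+1) p.1 L hL).1
      rw [Finset.prod_range_succ]
      congr 1
      · apply Finset.prod_congr rfl
        intro i hi
        rw [Finset.mem_range] at hi
        rw [List.getD_append L [v] [] i (by omega)]
      · rw [List.getD_append_right L [v] [] (n+1) (by omega), hlen]
        simp
    rw [Finset.sum_congr rfl himg]
    rw [Finset.mul_sum]
    apply Finset.sum_congr rfl
    intro p hp
    rw [M_eq_sum St Blf w mw (n+1) p.1, Finset.mul_sum]
    apply Finset.sum_congr rfl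
    intro L _
    ring
end FBT
/-- correctness of the marginalisation dynamic program: the sum
of the DP table over the right boundary equals the sum, over internal trees
with `N` leaves, of the product of the weights at their leaves. -/
theorem stmt12 (D N : ℕ) (hN : 1 ≤ N) (w : ℕ → List Bool → ℝ) (mw : List Bool → ℝ)
    (hw : ∀ n v, 0 ≤ w n v) (hm : ∀ v, 0 ≤ mw v) :
    ∑ v ∈ FBT.Br D, FBT.M (FBT.S D) (FBT.Bl D) w mw N v =
      ∑ T ∈ (FBT.trees D).filter (fun T => T.leaves.length = N),
        ∏ n ∈ Finset.range N, w (n + 1) (T.leaves.getD n []) * mw (T.leaves.getD n []) := by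
  classical
  rw [Finset.sum_congr rfl (fun v _ => FBT.M_eq_sum (FBT.S D) (FBT.Bl D) w mw N v)]
  have hdisj : ((FBT.Br D : Finset (List Bool)) : Set (List Bool)).PairwiseDisjoint
      (fun v => FBT.P (FBT.S D) (FBT.Bl D) N v) := by
    intro v hv v' hv' hne
    simp only [Function.onFun, Finset.disjoint_left]
    intro L hL1 hL2
    have e1 := (FBT.P_shape _ _ N v L hL1).2.1
    have e2 := (FBT.P_shape _ _ N v' L hL2).2.1
    rw [e1] at e2; injection e2 with e2; exact hne e2
  rw [← Finset.sum_biUnion hdisj]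
  have himg : (FBT.Br D).biUnion (fun v => FBT.P (FBT.S D) (FBT.Bl D) N v) =
      ((FBT.trees D).filter (fun T => T.leaves.length = N)).image FBT.leaves := by
    ext L
    simp only [Finset.mem_biUnion, Finset.mem_image, Finset.mem_filter]
    constructor
    · rintro ⟨v, hv, hLP⟩
      obtain ⟨hlen, hlast, ⟨h, t, hht, hh⟩, hch⟩ := FBT.P_shape _ _ N v L hLP
      obtain ⟨T, hT, hTL⟩ := FBT.exists_tree D L h v (by rw [hht]; rfl) hh hlast hv hch
      exact ⟨T, ⟨hT, by rw [hTL, hlen]⟩, hTL⟩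
    · rintro ⟨T, ⟨hT, hlen⟩, rfl⟩
      obtain ⟨k, hk, hlast⟩ := FBT.getLast?_leaves T
      have hdep := (FBT.mem_trees_iff D T).mp hT
      obtain ⟨k₀, hk₀, hhead⟩ := FBT.head?_leaves T
      have hch : List.Chain' (fun a b => (a, b) ∈ FBT.S D) T.leaves := by
        rw [FBT.chain'_iff_pairs]
        intro p hp
        show (p.1, p.2) ∈ FBT.S D
        rw [Prod.mk.eta, FBT.S, Finset.mem_biUnion]
        refine ⟨T, hT, ?_⟩
        rw [FBT.transitions, List.mem_toFinset]
        exact hp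
      obtain ⟨h, t, hht⟩ := List.exists_cons_of_ne_nil (FBT.leaves_ne_nil T)
      have hh : h ∈ FBT.Bl D := by
        have hh' : T.leaves.head? = some h := by rw [hht]; rfl
        rw [hhead] at hh'
        injection hh' with hh'
        rw [← hh']
        exact (FBT.mem_Bl_iff _ _).mpr ⟨k₀, le_trans hk₀ hdep, rfl⟩
      refine ⟨List.replicate k true,
        (FBT.mem_Br_iff _ _).mpr ⟨k, le_trans hk hdep, rfl⟩, ?_⟩
      exact FBT.P_full _ _ N T.leaves _ h t hht hh hlast hlen hch
  rw [himg, Finset.sum_image (fun x hx y hy hxy => FBT.leaves_injective x y hxy)]
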